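/- Let u : ℝⁿ → ℝᵐ be continuous and nonconstant, and suppose u is homogeneous of the same degree α > 0 about each of the points x₀, x₁, …, x_k ∈ ℝⁿ, where the vectors x₁ − x₀, …, x_k − x₀ are linearly independent. Then u is invariant under translations by any vector in V = span{x₁ − x₀, …, x_k − x₀}: u(y + v) = u(y) for all y ∈ ℝⁿ and v ∈ V. Consequently u is homogeneous of degree α about every point of the affine subspace x₀ + V. -/

import Mathlib

/-- If a continuous nonconstant map `u : ℝⁿ → ℝᵐ` is homogeneous of the same degree `α > 0`
about points `x 0, …, x k` with `x 1 - x 0, …, x k - x 0` linearly independent, then `u` is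
invariant under `V = span {x i - x 0}` and is homogeneous of degree `α` about every point of
the affine subspace `x 0 + V`. -/
theorem multi_point_homogeneity {n m k : ℕ} (u : (Fin n → ℝ) → (Fin m → ℝ))
    (hcont : Continuous u) (hnc : ∃ a b, u a ≠ u b)
    (α : ℝ) (hα : 0 < α)
    (x : Fin (k + 1) → (Fin n → ℝ))
    (hli : LinearIndependent ℝ (fun i : Fin k => x i.succ - x 0))
    (hu0 : ∀ i, u (x i) = 0)
    (hhom : ∀ (i : Fin (k + 1)) (z : Fin n → ℝ) (l : ℝ), 0 < l →
      u (x i + l • z) = l ^ α • u (x i + z)) :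
    (∀ (y : Fin n → ℝ) (v : Fin n → ℝ),
        v ∈ Submodule.span ℝ (Set.range fun i : Fin k => x i.succ - x 0) →
        u (y + v) = u y) ∧
    (∀ v ∈ Submodule.span ℝ (Set.range fun i : Fin k => x i.succ - x 0),
        u (x 0 + v) = 0 ∧
        ∀ (z : Fin n → ℝ) (l : ℝ), 0 < l →
          u ((x 0 + v) + l • z) = l ^ α • u ((x 0 + v) + z)) := by
  classical
  set w : Fin k → (Fin n → ℝ) := fun i => x i.succ - x 0 with hw
  -- invariance under each generator
  have key : ∀ i : Fin k, ∀ y : Fin n → ℝ, u (y + w i) = u y := by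
    intro i y
    have heq : ∀ l : ℝ, 0 < l → u (x i.succ + (y - x 0)) = u (x 0 + (l⁻¹ • w i + (y - x 0))) := by
      intro l hl
      have h1 := hhom i.succ (y - x 0) l hl
      have h2 := hhom 0 (l⁻¹ • w i + (y - x 0)) l hl
      have hx : x i.succ + l • (y - x 0) = x 0 + l • (l⁻¹ • w i + (y - x 0)) := by
        rw [smul_add, smul_smul, mul_inv_cancel₀ hl.ne', one_smul, hw]
        ext j; simp; ring
      rw [hx, h2] at h1
      have hpos : (0:ℝ) < l ^ α := Real.rpow_pos_of_pos hl α
      exact (smul_right_injective (Fin m → ℝ) hpos.ne' h1).symm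
    have hlim : Filter.Tendsto (fun l : ℝ => u (x 0 + (l⁻¹ • w i + (y - x 0))))
        Filter.atTop (nhds (u (x 0 + ((0:ℝ) • w i + (y - x 0))))) := by
      apply (hcont.tendsto _).comp
      apply Filter.Tendsto.const_add
      apply Filter.Tendsto.add_const
      exact tendsto_inv_atTop_zero.smul_const _
    have hconst : Filter.Tendsto (fun l : ℝ => u (x 0 + (l⁻¹ • w i + (y - x 0))))
        Filter.atTop (nhds (u (x i.succ + (y - x 0)))) := by
      refine Filter.Tendsto.congr' ?_ tendsto_const_nhds
      filter_upwards [Filter.eventually_gt_atTop 0] with l hl using heq l hl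
    have hmain : u (x i.succ + (y - x 0)) = u (x 0 + ((0:ℝ) • w i + (y - x 0))) :=
      tendsto_nhds_unique hconst hlim
    have e1 : y + w i = x i.succ + (y - x 0) := by rw [hw]; abel
    have e2 : x 0 + ((0:ℝ) • w i + (y - x 0)) = y := by rw [zero_smul]; abel
    rw [e1, hmain, e2]
  -- closure under scalar multiplication
  have hneg : ∀ v : Fin n → ℝ, (∀ y, u (y + v) = u y) → ∀ y, u (y - v) = u y := by
    intro v hv y
    have := hv (y - v)
    rw [sub_add_cancel] at this
    exact this.symm
  have hsmul : ∀ (c : ℝ) (v : Fin n → ℝ), (∀ y, u (y + v) = u y) →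
      ∀ y, u (y + c • v) = u y := by
    have pos : ∀ (c : ℝ), 0 < c → ∀ (v : Fin n → ℝ), (∀ y, u (y + v) = u y) →
        ∀ y, u (y + c • v) = u y := by
      intro c hc v hv y
      have e1 : y + c • v = x 0 + c • (c⁻¹ • (y - x 0) + v) := by
        rw [smul_add, smul_smul, mul_inv_cancel₀ hc.ne', one_smul]; abel
      have e2 : x 0 + c⁻¹ • (y - x 0) + v = (x 0 + c⁻¹ • (y - x 0)) + v := by abel
      have e3 : x 0 + c • (c⁻¹ • (y - x 0)) = y := by
        rw [smul_smul, mul_inv_cancel₀ hc.ne', one_smul]; abel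
      calc u (y + c • v) = c ^ α • u (x 0 + (c⁻¹ • (y - x 0) + v)) := by
            rw [e1]; exact hhom 0 _ c hc
        _ = c ^ α • u (x 0 + c⁻¹ • (y - x 0)) := by
            rw [← add_assoc, hv (x 0 + c⁻¹ • (y - x 0))]
        _ = u (x 0 + c • (c⁻¹ • (y - x 0))) := (hhom 0 _ c hc).symm
        _ = u y := by rw [e3]
    intro c v hv y
    rcases lt_trichotomy c 0 with h | h | h
    · have hp := pos (-c) (by linarith) v hv
      have := hneg ((-c) • v) hp y
      rwa [neg_smul, sub_neg_eq_add] at this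
    · simp [h]
    · exact pos c h v hv y
  -- invariance under the whole span
  have inv : ∀ v ∈ Submodule.span ℝ (Set.range fun i : Fin k => x i.succ - x 0),
      ∀ y, u (y + v) = u y := by
    intro v hv
    induction hv using Submodule.span_induction with
    | mem v hvm =>
      obtain ⟨i, rfl⟩ := hvm
      exact key i
    | zero => intro y; simp
    | add a b _ _ ha hb =>
      intro y
      have := ha y
      have hb' := hb (y + a)
      rw [← add_assoc] at *
      rw [hb', ha y]
    | smul c a _ ha => exact hsmul c a ha
  refine ⟨fun y v hv => inv v hv y, fun v hv => ?_⟩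
  refine ⟨by rw [inv v hv (x 0), hu0 0], fun z l hl => ?_⟩
  have e1 : x 0 + v + l • z = (x 0 + l • z) + v := by abel
  have e2 : x 0 + v + z = (x 0 + z) + v := by abel
  rw [e1, inv v hv _, hhom 0 z l hl, e2, inv v hv _]
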